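/- One-parameter min-max comparison via a deformation map: let E be a normed vector space, Φ : E → ℝ continuous, U ⊆ U' ⊆ E, and u₀, u₁ ∈ U. Let 𝒫 := {p : [0,1] → E continuous : p(0) = u₀, p(1) = u₁, p(t) ∈ U for all t} and 𝒫' the analogous class of paths taking values in U', and suppose 𝒫 ≠ ∅. Set d := inf_{p ∈ 𝒫} max_{t ∈ [0,1]} Φ(p(t)) and d' := inf_{p ∈ 𝒫'} max_{t ∈ [0,1]} Φ(p(t)). Suppose η̄ > 0 and F : E → E is continuous with F(u₀) = u₀, F(u₁) = u₁, and such that for every u ∈ U with Φ(u) ≤ d + η̄ one has F(u) ∈ U' and Φ(F(u)) ≤ d − η̄. Then d' ≤ d − η̄. -/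
import Mathlib


/-- One-parameter min-max comparison via a deformation map: if `F` fixes the endpoints
`u₀, u₁` and maps every point of `U` with `Φ ≤ d + η̄` into `U'` while lowering `Φ`
below `d - η̄`, then the min-max value `d'` over the enlarged path class satisfies
`d' ≤ d - η̄`. -/
theorem one_parameter_minmax_comparison {E : Type*} [NormedAddCommGroup E]
    [NormedSpace ℝ E]
    (Φ : E → ℝ) (hΦ : Continuous Φ)
    (U U' : Set E) (hUU' : U ⊆ U')
    (u₀ u₁ : E) (hu₀ : u₀ ∈ U) (hu₁ : u₁ ∈ U)
    (P P' : Set (ℝ → E))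
    (hP : P = {p : ℝ → E | ContinuousOn p (Set.Icc 0 1) ∧ p 0 = u₀ ∧ p 1 = u₁ ∧
      ∀ t ∈ Set.Icc (0 : ℝ) 1, p t ∈ U})
    (hP' : P' = {p : ℝ → E | ContinuousOn p (Set.Icc 0 1) ∧ p 0 = u₀ ∧ p 1 = u₁ ∧
      ∀ t ∈ Set.Icc (0 : ℝ) 1, p t ∈ U'})
    (hPne : P.Nonempty)
    (d d' : ℝ)
    (hd : d = sInf ((fun p : ℝ → E => sSup (Φ '' (p '' Set.Icc (0 : ℝ) 1))) '' P))
    (hd' : d' = sInf ((fun p : ℝ → E => sSup (Φ '' (p '' Set.Icc (0 : ℝ) 1))) '' P'))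
    (ηbar : ℝ) (hηbar : 0 < ηbar)
    (F : E → E) (hF : Continuous F) (hF0 : F u₀ = u₀) (hF1 : F u₁ = u₁)
    (hdef : ∀ u ∈ U, Φ u ≤ d + ηbar → F u ∈ U' ∧ Φ (F u) ≤ d - ηbar) :
    d' ≤ d - ηbar := by
  have h0I : (0:ℝ) ∈ Set.Icc (0:ℝ) 1 := by constructor <;> norm_num
  have h1I : (1:ℝ) ∈ Set.Icc (0:ℝ) 1 := by constructor <;> norm_num
  -- compactness of value sets
  have key : ∀ q : ℝ → E, ContinuousOn q (Set.Icc 0 1) →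
      IsCompact (Φ '' (q '' Set.Icc (0:ℝ) 1)) := by
    intro q hq
    exact (isCompact_Icc.image_of_continuousOn hq).image hΦ
  -- lower bound Φ u₀ for the value set over P'
  have hlb' : ∀ x ∈ (fun p : ℝ → E => sSup (Φ '' (p '' Set.Icc (0 : ℝ) 1))) '' P',
      Φ u₀ ≤ x := by
    rintro x ⟨q, hq, rfl⟩
    rw [hP'] at hq
    obtain ⟨hqc, hq0, hq1, hqU⟩ := hq
    have : Φ u₀ ∈ Φ '' (q '' Set.Icc (0:ℝ) 1) := ⟨q 0, ⟨0, h0I, rfl⟩, by rw [hq0]⟩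
    exact le_csSup (key q hqc).bddAbove this
  have hlb : ∀ x ∈ (fun p : ℝ → E => sSup (Φ '' (p '' Set.Icc (0 : ℝ) 1))) '' P,
      Φ u₀ ≤ x := by
    rintro x ⟨q, hq, rfl⟩
    rw [hP] at hq
    obtain ⟨hqc, hq0, hq1, hqU⟩ := hq
    have : Φ u₀ ∈ Φ '' (q '' Set.Icc (0:ℝ) 1) := ⟨q 0, ⟨0, h0I, rfl⟩, by rw [hq0]⟩
    exact le_csSup (key q hqc).bddAbove this
  -- pick a near-optimal path p ∈ P
  have hne : ((fun p : ℝ → E => sSup (Φ '' (p '' Set.Icc (0 : ℝ) 1))) '' P).Nonempty :=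
    hPne.image _
  obtain ⟨x, ⟨p, hpP, rfl⟩, hx⟩ := Real.lt_sInf_add_pos hne hηbar
  rw [← hd] at hx
  have hpP' := hpP
  rw [hP] at hpP'
  obtain ⟨hpc, hp0, hp1, hpU⟩ := hpP'
  have hub : ∀ t ∈ Set.Icc (0:ℝ) 1, Φ (p t) ≤ d + ηbar := by
    intro t ht
    have : Φ (p t) ∈ Φ '' (p '' Set.Icc (0:ℝ) 1) := ⟨p t, ⟨t, ht, rfl⟩, rfl⟩
    exact le_of_lt (lt_of_le_of_lt (le_csSup (key p hpc).bddAbove this) hx)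
  -- the deformed path
  set q : ℝ → E := F ∘ p with hqdef
  have hqc : ContinuousOn q (Set.Icc 0 1) := hF.comp_continuousOn hpc
  have hqP' : q ∈ P' := by
    rw [hP']
    refine ⟨hqc, by simp [hqdef, hp0, hF0], by simp [hqdef, hp1, hF1], ?_⟩
    intro t ht
    exact (hdef (p t) (hpU t ht) (hub t ht)).1
  have hqval : sSup (Φ '' (q '' Set.Icc (0:ℝ) 1)) ≤ d - ηbar := by
    refine csSup_le ⟨Φ (q 0), ⟨q 0, ⟨0, h0I, rfl⟩, rfl⟩⟩ ?_
    rintro y ⟨_, ⟨t, ht, rfl⟩, rfl⟩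
    exact (hdef (p t) (hpU t ht) (hub t ht)).2
  calc d' ≤ sSup (Φ '' (q '' Set.Icc (0:ℝ) 1)) := by
        rw [hd']
        exact csInf_le ⟨Φ u₀, fun x hx => hlb' x hx⟩ ⟨q, hqP', rfl⟩
    _ ≤ d - ηbar := hqval
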